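/- Let C : ℝ → ℂ be a trigonometric polynomial of the form C(θ) = ∑_{k=-2}^{2} β_k · exp(i·k·θ) for some coefficients β_{-2}, β_{-1}, β_0, β_1, β_2 ∈ ℂ. Then for every θ ∈ ℝ, the derivative of C satisfies the four-term parameter shift rule C'(θ) = [C(θ + π/4) − C(θ − π/4)] − ((√2 − 1)/2)·[C(θ + π/2) − C(θ − π/2)]. -/

import Mathlib

open Complex Real

/-- **Four-term parameter shift rule** for a trigonometric polynomial
`C(θ) = ∑_{k=-2}^{2} β_k · exp(i k θ)`. -/
theorem four_term_parameter_shift_rule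
    (β : ℤ → ℂ) (C : ℝ → ℂ)
    (hC : ∀ θ : ℝ, C θ = ∑ k ∈ Finset.Icc (-2 : ℤ) 2,
        β k * Complex.exp (Complex.I * (k : ℂ) * (θ : ℂ))) :
    ∀ θ : ℝ, deriv C θ =
      (C (θ + π / 4) - C (θ - π / 4))
        - ((Real.sqrt 2 - 1) / 2 : ℝ) * (C (θ + π / 2) - C (θ - π / 2)) := by
  intro θ
  have hCfun : C = fun θ : ℝ => ∑ k ∈ Finset.Icc (-2 : ℤ) 2,
      β k * Complex.exp (Complex.I * (k : ℂ) * (θ : ℂ)) := funext hC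
  -- derivative of each term
  have hterm : ∀ k : ℤ,
      HasDerivAt (fun θ : ℝ => β k * Complex.exp (Complex.I * (k:ℂ) * (θ:ℂ)))
        (β k * ((Complex.I * (k:ℂ)) * Complex.exp (Complex.I * (k:ℂ) * (θ:ℂ)))) θ := by
    intro k
    have h1 : HasDerivAt (fun z : ℂ => Complex.exp (Complex.I * (k:ℂ) * z))
        (Complex.I * (k:ℂ) * Complex.exp (Complex.I * (k:ℂ) * (θ:ℂ))) (θ:ℂ) := by
      simpa [mul_comm] using ((hasDerivAt_id (θ:ℂ)).const_mul (Complex.I * (k:ℂ))).cexp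
    simpa [mul_assoc, mul_comm, mul_left_comm] using (h1.comp_ofReal).const_mul (β k)
  have hsum : HasDerivAt C
      (∑ k ∈ Finset.Icc (-2 : ℤ) 2,
        β k * ((Complex.I * (k:ℂ)) * Complex.exp (Complex.I * (k:ℂ) * (θ:ℂ)))) θ := by
    rw [hCfun]
    exact HasDerivAt.fun_sum fun k _ => hterm k
  rw [hsum.deriv, hC, hC, hC, hC]
  rw [← Finset.sum_sub_distrib, ← Finset.sum_sub_distrib, Finset.mul_sum,
    ← Finset.sum_sub_distrib]
  refine Finset.sum_congr rfl fun k hk => ?_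
  rw [Finset.mem_Icc] at hk
  obtain ⟨h1, h2⟩ := hk
  have e1 : ∀ a : ℝ, Complex.exp (Complex.I * (k:ℂ) * ((θ + a : ℝ):ℂ)) =
      Complex.exp (Complex.I * (k:ℂ) * (θ:ℂ)) * Complex.exp (((k:ℝ)*a : ℝ) * Complex.I) := by
    intro a; rw [← Complex.exp_add]; push_cast; ring_nf
  have e2 : ∀ a : ℝ, Complex.exp (Complex.I * (k:ℂ) * ((θ - a : ℝ):ℂ)) =
      Complex.exp (Complex.I * (k:ℂ) * (θ:ℂ)) * Complex.exp ((-((k:ℝ)*a) : ℝ) * Complex.I) := by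
    intro a; rw [← Complex.exp_add]; push_cast; ring_nf
  rw [e1, e2, e1, e2]
  have E : ∀ x : ℝ, Complex.exp ((x:ℂ) * Complex.I) =
      ((Real.cos x : ℝ):ℂ) + ((Real.sin x : ℝ):ℂ) * Complex.I := by
    intro x; rw [Complex.exp_mul_I, Complex.ofReal_cos, Complex.ofReal_sin]
  interval_cases k <;>
    simp only [E, Int.cast_neg, Int.cast_one, Int.cast_two, Int.cast_zero,
      Int.cast_ofNat, neg_mul, neg_neg, one_mul, Real.cos_neg, Real.sin_neg] <;>
    norm_num [show ((2:ℝ))*(π/4) = π/2 by ring, show ((2:ℝ))*(π/2) = π by ring,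
      Real.cos_pi_div_two, Real.sin_pi_div_two, Real.cos_pi, Real.sin_pi,
      Real.cos_pi_div_four, Real.sin_pi_div_four] <;>
    push_cast <;>
    ring
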